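/- Let w be a continuously differentiable real-valued function on Ω that vanishes on the plane {z = 0}. Then for every z ∈ [0,1], ⨍_{[0,l_x]×[0,l_y]} w(x,y,z)² dx dy ≤ 4 z · ⨍_Ω |∂_z w|², where ⨍ denotes the average (integral divided by the measure of the integration domain). -/

import Mathlib

open MeasureTheory

/-- Cauchy–Schwarz on `Icc 0 z` for a continuous function. -/
lemma cs_aux {f : ℝ → ℝ} (hf : Continuous f) {z : ℝ} (hz : 0 ≤ z) :
    (∫ t in Set.Icc (0:ℝ) z, f t) ^ 2 ≤ z * ∫ t in Set.Icc (0:ℝ) z, f t ^ 2 := by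
  set μ := volume.restrict (Set.Icc (0:ℝ) z) with hμ
  haveI : IsFiniteMeasure μ := by
    constructor
    rw [hμ, Measure.restrict_apply_univ, Real.volume_Icc]
    exact ENNReal.ofReal_lt_top
  have hpq : Real.HolderConjugate 2 2 := Real.holderConjugate_iff.mpr ⟨one_lt_two, by norm_num⟩
  obtain ⟨C, hC⟩ : ∃ C, ∀ t ∈ Set.Icc (0:ℝ) z, ‖f t‖ ≤ C := by
    obtain ⟨C, hC⟩ := (isCompact_Icc (a := (0:ℝ)) (b := z)).exists_bound_of_continuousOn
      hf.continuousOn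
    exact ⟨C, hC⟩
  have hmem : MemLp (fun t => |f t|) (ENNReal.ofReal 2) μ := by
    apply MemLp.of_bound ((hf.abs).aestronglyMeasurable) C
    filter_upwards [ae_restrict_mem measurableSet_Icc] with t ht
    simpa [abs_abs] using hC t ht
  have hmem1 : MemLp (fun _ : ℝ => (1:ℝ)) (ENNReal.ofReal 2) μ := memLp_const 1
  have H := integral_mul_le_Lp_mul_Lq_of_nonneg hpq
    (f := fun t => |f t|) (g := fun _ => (1:ℝ))
    (Filter.Eventually.of_forall fun t => abs_nonneg _)
    (Filter.Eventually.of_forall fun _ => zero_le_one) hmem hmem1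
  simp only [mul_one] at H
  have e1 : ∀ t : ℝ, |f t| ^ (2:ℝ) = f t ^ 2 := by
    intro t
    rw [show ((2:ℝ)) = ((2:ℕ) : ℝ) by norm_num, Real.rpow_natCast, sq_abs]
  have e2 : (∫ t, (1:ℝ) ^ (2:ℝ) ∂μ) = z := by
    simp [hμ, Real.volume_Icc, ENNReal.toReal_ofReal hz, hz]
  simp only [e1, e2] at H
  -- H : ∫ |f| ∂μ ≤ (∫ f^2 ∂μ)^(1/2) * z^(1/2)
  have hA : 0 ≤ ∫ t, f t ^ 2 ∂μ := integral_nonneg fun t => sq_nonneg _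
  have habs : |∫ t, f t ∂μ| ≤ ∫ t, |f t| ∂μ := by
    simpa using norm_integral_le_integral_norm (μ := μ) f
  have h1 : (∫ t, f t ∂μ) ^ 2 ≤ (∫ t, |f t| ∂μ) ^ 2 := by
    rw [← sq_abs (∫ t, f t ∂μ)]
    exact pow_le_pow_left₀ (abs_nonneg _) habs 2
  have h2 : ((∫ t, f t ^ 2 ∂μ) ^ ((1:ℝ)/2) * z ^ ((1:ℝ)/2)) ^ 2
      = (∫ t, f t ^ 2 ∂μ) * z := by
    rw [mul_pow, ← Real.rpow_natCast ((∫ t, f t ^ 2 ∂μ) ^ ((1:ℝ)/2)) 2,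
      ← Real.rpow_natCast (z ^ ((1:ℝ)/2)) 2, ← Real.rpow_mul hA, ← Real.rpow_mul hz]
    norm_num
  calc (∫ t, f t ∂μ) ^ 2 ≤ (∫ t, |f t| ∂μ) ^ 2 := h1
    _ ≤ ((∫ t, f t ^ 2 ∂μ) ^ ((1:ℝ)/2) * z ^ ((1:ℝ)/2)) ^ 2 := by
        apply pow_le_pow_left₀ (integral_nonneg fun t => abs_nonneg _) H
    _ = (∫ t, f t ^ 2 ∂μ) * z := h2
    _ = z * ∫ t in Set.Icc (0:ℝ) z, f t ^ 2 := mul_comm _ _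

/-- Square-root growth estimate (eq. (2.8)): for `w` continuously differentiable on
`Ω = [0,l_x] × [0,l_y] × [0,1]` vanishing on `{z = 0}`, the horizontal average of `w²`
at height `z` is at most `4 z · ⨍_Ω |∂_z w|²`. -/
theorem stmt1 (lx ly : ℝ) (hlx : 0 < lx) (hly : 0 < ly)
    (w : ℝ × ℝ × ℝ → ℝ)
    (hw : ContDiff ℝ 1 w)
    (hw0 : ∀ x y : ℝ, w (x, y, 0) = 0)
    (z : ℝ) (hz : z ∈ Set.Icc (0:ℝ) 1) :
    (lx * ly)⁻¹ * ∫ p in Set.Icc 0 lx ×ˢ Set.Icc 0 ly, (w (p.1, p.2, z)) ^ 2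
      ≤ 4 * z * ((lx * ly)⁻¹ * ∫ p in Set.Icc 0 lx ×ˢ Set.Icc 0 ly ×ˢ Set.Icc (0:ℝ) 1,
            (deriv (fun t => w (p.1, p.2.1, t)) p.2.2) ^ 2) := by
  obtain ⟨hz0, hz1⟩ := hz
  set A := Set.Icc (0:ℝ) lx
  set B := Set.Icc (0:ℝ) ly
  set C := Set.Icc (0:ℝ) 1
  -- the vertical derivative
  set D : ℝ × ℝ × ℝ → ℝ := fun p => fderiv ℝ w p (0, 0, 1) with hDdef
  have hD : Continuous D := by
    exact (hw.continuous_fderiv one_ne_zero).clm_apply continuous_const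
  have hderiv : ∀ x y t : ℝ, HasDerivAt (fun s => w (x, y, s)) (D (x, y, t)) t := by
    intro x y t
    have h1 : HasDerivAt (fun s : ℝ => ((x, y, s) : ℝ × ℝ × ℝ)) ((0:ℝ), (0:ℝ), (1:ℝ)) t :=
      (hasDerivAt_const t x).prodMk ((hasDerivAt_const t y).prodMk (hasDerivAt_id t))
    have h2 := ((hw.differentiable one_ne_zero) (x, y, t)).hasFDerivAt.comp_hasDerivAt t h1
    exact h2
  have hderiv_eq : ∀ x y t : ℝ, deriv (fun s => w (x, y, s)) t = D (x, y, t) :=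
    fun x y t => (hderiv x y t).deriv
  -- pointwise estimate
  have key : ∀ x y : ℝ, w (x, y, z) ^ 2 ≤ z * ∫ t in C, D (x, y, t) ^ 2 := by
    intro x y
    have hfc : Continuous fun t => D (x, y, t) := hD.comp (continuous_const.prodMk (continuous_const.prodMk continuous_id))
    have hFTC : ∫ t in (0:ℝ)..z, D (x, y, t) = w (x, y, z) - w (x, y, 0) :=
      intervalIntegral.integral_eq_sub_of_hasDerivAt (fun t _ => hderiv x y t)
        (hfc.intervalIntegrable 0 z)
    have hwz : w (x, y, z) = ∫ t in Set.Icc (0:ℝ) z, D (x, y, t) := by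
      have e : ∫ t in Set.Icc (0:ℝ) z, D (x, y, t) = ∫ t in (0:ℝ)..z, D (x, y, t) := by
        rw [MeasureTheory.integral_Icc_eq_integral_Ioc, intervalIntegral.integral_of_le hz0]
      rw [e, hFTC, hw0 x y, sub_zero]
    rw [hwz]
    calc (∫ t in Set.Icc (0:ℝ) z, D (x, y, t)) ^ 2
        ≤ z * ∫ t in Set.Icc (0:ℝ) z, D (x, y, t) ^ 2 := cs_aux hfc hz0
      _ ≤ z * ∫ t in C, D (x, y, t) ^ 2 := by
          apply mul_le_mul_of_nonneg_left _ hz0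
          apply setIntegral_mono_set ((hfc.pow 2).integrableOn_Icc)
            (Filter.Eventually.of_forall fun t => sq_nonneg _)
            (HasSubset.Subset.eventuallyLE (Set.Icc_subset_Icc le_rfl hz1))
  -- integrability
  have hwcont : Continuous fun p : ℝ × ℝ => w (p.1, p.2, z) ^ 2 :=
    ((hw.continuous.comp (continuous_fst.prodMk (continuous_snd.prodMk continuous_const))).pow 2)
  have hφint : IntegrableOn (fun p : ℝ × ℝ => w (p.1, p.2, z) ^ 2) (A ×ˢ B) :=
    hwcont.continuousOn.integrableOn_compact (isCompact_Icc.prod isCompact_Icc)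
  have hDint : IntegrableOn (fun p : ℝ × ℝ × ℝ => D p ^ 2) (A ×ˢ B ×ˢ C) :=
    (hD.pow 2).continuousOn.integrableOn_compact
      (isCompact_Icc.prod (isCompact_Icc.prod isCompact_Icc))
  have hvol2 : (volume : Measure (ℝ × ℝ)) = (volume : Measure ℝ).prod volume :=
    Measure.volume_eq_prod ℝ ℝ
  have hvol3 : (volume : Measure (ℝ × ℝ × ℝ)) = (volume : Measure ℝ).prod volume :=
    Measure.volume_eq_prod ℝ (ℝ × ℝ)
  -- rewrite integrands
  have hint_congr : ∫ p in A ×ˢ B ×ˢ C, (deriv (fun t => w (p.1, p.2.1, t)) p.2.2) ^ 2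
      = ∫ p in A ×ˢ B ×ˢ C, D p ^ 2 := by
    apply integral_congr_ae
    filter_upwards with p
    rw [hderiv_eq]
  -- Fubini on the triple integral
  have hDint' : IntegrableOn (fun p : ℝ × ℝ × ℝ => D p ^ 2) (A ×ˢ B ×ˢ C)
      ((volume : Measure ℝ).prod volume) := by rwa [← hvol3]
  have hfub3 : ∫ p in A ×ˢ B ×ˢ C, D p ^ 2
      = ∫ x in A, ∫ q in B ×ˢ C, D (x, q) ^ 2 := by
    rw [hvol3]
    exact setIntegral_prod _ hDint'
  have hφint' : IntegrableOn (fun p : ℝ × ℝ => w (p.1, p.2, z) ^ 2) (A ×ˢ B)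
      ((volume : Measure ℝ).prod volume) := by rwa [← hvol2]
  have hfub2 : ∫ p in A ×ˢ B, w (p.1, p.2, z) ^ 2
      = ∫ x in A, ∫ y in B, w (x, y, z) ^ 2 := by
    rw [hvol2]
    exact setIntegral_prod _ hφint'
  -- per-x inner inequality
  have inner_ineq : ∀ x : ℝ, (∫ y in B, w (x, y, z) ^ 2)
      ≤ z * ∫ q in B ×ˢ C, D (x, q) ^ 2 := by
    intro x
    have hDx : IntegrableOn (fun q : ℝ × ℝ => D (x, q) ^ 2) (B ×ˢ C) :=
      ((hD.comp (Continuous.prodMk_right x)).pow 2).continuousOn.integrableOn_compact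
        (isCompact_Icc.prod isCompact_Icc)
    have hDx' : IntegrableOn (fun q : ℝ × ℝ => D (x, q) ^ 2) (B ×ˢ C)
        ((volume : Measure ℝ).prod volume) := by
      rwa [← (Measure.volume_eq_prod ℝ ℝ : (volume : Measure (ℝ × ℝ)) = _)]
    have hfubx : ∫ q in B ×ˢ C, D (x, q) ^ 2
        = ∫ y in B, ∫ t in C, D (x, y, t) ^ 2 := by
      rw [(Measure.volume_eq_prod ℝ ℝ)]
      exact setIntegral_prod _ hDx'
    have hint_h : IntegrableOn (fun y => ∫ t in C, D (x, y, t) ^ 2) B := by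
      have h' : Integrable (fun q : ℝ × ℝ => D (x, q) ^ 2)
          ((volume.restrict B).prod (volume.restrict C)) := by
        rw [Measure.prod_restrict]; exact hDx'
      exact h'.integral_prod_left
    have hcy : IntegrableOn (fun y : ℝ => w (x, y, z) ^ 2) B :=
      Continuous.integrableOn_Icc
        ((hw.continuous.comp (continuous_const.prodMk
          (continuous_id.prodMk continuous_const)) : Continuous fun y : ℝ => w (x, y, z)).pow 2)
    have step : ∫ y in B, w (x, y, z) ^ 2
        ≤ ∫ y in B, z * ∫ t in C, D (x, y, t) ^ 2 :=
      setIntegral_mono_on hcy (hint_h.const_mul z) measurableSet_Icc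
        (fun y _ => key x y)
    calc ∫ y in B, w (x, y, z) ^ 2
        ≤ ∫ y in B, z * ∫ t in C, D (x, y, t) ^ 2 := step
      _ = z * ∫ y in B, ∫ t in C, D (x, y, t) ^ 2 := integral_const_mul z _
      _ = z * ∫ q in B ×ˢ C, D (x, q) ^ 2 := by rw [hfubx]
  -- outer inequality
  have hg1int : IntegrableOn (fun x => ∫ y in B, w (x, y, z) ^ 2) A := by
    have h' : Integrable (fun p : ℝ × ℝ => w (p.1, p.2, z) ^ 2)
        ((volume.restrict A).prod (volume.restrict B)) := by
      rw [Measure.prod_restrict]; exact hφint'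
    exact h'.integral_prod_left
  have hg2int : IntegrableOn (fun x => z * ∫ q in B ×ˢ C, D (x, q) ^ 2) A := by
    have h' : Integrable (fun p : ℝ × ℝ × ℝ => D p ^ 2)
        ((volume.restrict A).prod (volume.restrict (B ×ˢ C))) := by
      rw [Measure.prod_restrict]; exact hDint'
    exact h'.integral_prod_left.const_mul z
  have outer : ∫ x in A, ∫ y in B, w (x, y, z) ^ 2
      ≤ z * ∫ p in A ×ˢ B ×ˢ C, D p ^ 2 := by
    calc ∫ x in A, ∫ y in B, w (x, y, z) ^ 2
        ≤ ∫ x in A, z * ∫ q in B ×ˢ C, D (x, q) ^ 2 :=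
          setIntegral_mono_on hg1int hg2int measurableSet_Icc fun x _ => inner_ineq x
      _ = z * ∫ x in A, ∫ q in B ×ˢ C, D (x, q) ^ 2 := integral_const_mul z _
      _ = z * ∫ p in A ×ˢ B ×ˢ C, D p ^ 2 := by rw [hfub3]
  -- assemble
  have hI_nonneg : 0 ≤ ∫ p in A ×ˢ B ×ˢ C, D p ^ 2 :=
    setIntegral_nonneg (measurableSet_Icc.prod (measurableSet_Icc.prod measurableSet_Icc))
      fun p _ => sq_nonneg _
  have hinv : 0 ≤ (lx * ly)⁻¹ := inv_nonneg.mpr (mul_nonneg hlx.le hly.le)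
  rw [hint_congr]
  calc (lx * ly)⁻¹ * ∫ p in A ×ˢ B, w (p.1, p.2, z) ^ 2
      ≤ (lx * ly)⁻¹ * (z * ∫ p in A ×ˢ B ×ˢ C, D p ^ 2) := by
        apply mul_le_mul_of_nonneg_left _ hinv
        rw [hfub2]; exact outer
    _ = z * ((lx * ly)⁻¹ * ∫ p in A ×ˢ B ×ˢ C, D p ^ 2) := by ring
    _ ≤ 4 * z * ((lx * ly)⁻¹ * ∫ p in A ×ˢ B ×ˢ C, D p ^ 2) := by
        nlinarith [mul_nonneg hinv hI_nonneg]
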